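/- Let x₁,x₂,x₃ ∈ ℝ² with all pairwise distances in (1−ε, √2+ε) and |x₁−x₂| = 1 + O(ε). Then for ε small enough, the angles ∠x₁x₂x₃ and ∠x₃x₁x₂ are both at least 45° − O(ε). -/

import Mathlib

open Real EuclideanGeometry

lemma cos_pi_div_four_sub_ge {t : ℝ} (ht : 0 ≤ t) (ht' : t ≤ 1/2) :
    Real.sqrt 2 / 2 + t / 4 ≤ Real.cos (π/4 - t) := by
  rw [Real.cos_sub, Real.cos_pi_div_four, Real.sin_pi_div_four]
  have hs2 : Real.sqrt 2 ^ 2 = 2 := Real.sq_sqrt (by norm_num)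
  have hs : Real.sqrt 2 ≥ 1.4 := by nlinarith [Real.sqrt_nonneg 2]
  rcases eq_or_lt_of_le ht with h | h
  · simp [← h]
  · have h1 : t - t^3/4 < Real.sin t := by
      have := Real.sin_gt_sub_cube h
      linarith [pow_pos h 3]
    have h2 : 1 - t^2/2 ≤ Real.cos t := Real.one_sub_sq_div_two_le_cos
    have hsum : 1 + t/2 ≤ Real.cos t + Real.sin t := by nlinarith
    nlinarith [mul_le_mul_of_nonneg_left hsum (show (0:ℝ) ≤ Real.sqrt 2 / 2 by positivity)]

set_option maxHeartbeats 800000 in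
lemma key_angle (C' ε a b c θ : ℝ) (hC' : 0 < C') (hε : 0 < ε)
    (hεs : ε ≤ 1/(1000*(C'+1)))
    (ha : |a - 1| ≤ C'*ε) (hc1 : 1 - ε < c) (hc2 : c < Real.sqrt 2 + ε)
    (hb : 1 - ε < b)
    (hθ1 : 0 ≤ θ) (hθ2 : θ ≤ π)
    (hcos : b^2 = a^2 + c^2 - 2*a*c*Real.cos θ) :
    π/4 - (100*(C'+1))*ε ≤ θ := by
  have hs2 : Real.sqrt 2 ^ 2 = 2 := Real.sq_sqrt (by norm_num)
  have hs : Real.sqrt 2 ≥ 1.4 := by nlinarith [Real.sqrt_nonneg 2]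
  have hs' : Real.sqrt 2 ≤ 1.5 := by nlinarith [Real.sqrt_nonneg 2]
  have habs := abs_le.mp ha
  rw [le_div_iff₀ (by positivity)] at hεs
  have hCe : C' * ε ≤ 1/1000 := by nlinarith
  have hε' : ε ≤ 1/1000 := by nlinarith
  have ha0 : (0:ℝ) < a := by linarith [habs.1]
  have hc0 : (0:ℝ) < c := by linarith
  set t := 100*(C'+1)*ε with ht_def
  have ht0 : 0 ≤ t := by positivity
  have ht2 : t ≤ 1/2 := by nlinarith
  have hkey : a^2 + c^2 - b^2 ≤ Real.sqrt 2 * a * c + 25*(C'+1)*ε := by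
    have h1 : a^2 ≤ 1 + 3*C'*ε := by nlinarith [habs.2, mul_pos hC' hε]
    have h2 : 1 - 2*ε ≤ b^2 := by nlinarith [sq_nonneg ε]
    have h3 : c^2 - Real.sqrt 2 * a * c ≤ 4*(C'+1)*ε := by
      rcases le_or_gt c (Real.sqrt 2 * a) with h | h
      · nlinarith [mul_nonneg hc0.le (sub_nonneg.mpr h)]
      · have hsa : Real.sqrt 2 - Real.sqrt 2*(C'*ε) ≤ Real.sqrt 2 * a := by
          nlinarith [mul_nonneg (Real.sqrt_nonneg 2) (show (0:ℝ) ≤ a-(1-C'*ε) by linarith [habs.1])]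
        have hsp : Real.sqrt 2 * (C'*ε) ≤ 1.5*(C'*ε) :=
          mul_le_mul_of_nonneg_right hs' (by positivity)
        have hd : c - Real.sqrt 2 * a ≤ 2*(1+C')*ε := by
          nlinarith [mul_pos hC' hε]
        have hc16 : c ≤ 1.6 := by linarith
        calc c^2 - Real.sqrt 2 * a * c = c*(c - Real.sqrt 2 * a) := by ring
          _ ≤ 1.6*(2*(1+C')*ε) :=
              mul_le_mul hc16 hd (le_of_lt (sub_pos.mpr h)) (by norm_num)
          _ ≤ 4*(C'+1)*ε := by nlinarith
    linarith [mul_pos hC' hε]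
  have hac : a * c ≥ 1/2 := by nlinarith [habs.1]
  have h2ac : 2*a*c*Real.cos θ = a^2 + c^2 - b^2 := by linarith
  have hcosle : Real.cos θ ≤ Real.sqrt 2 / 2 + t / 4 := by
    have hmul : Real.cos θ * (2*a*c) ≤ (Real.sqrt 2 / 2 + t / 4) * (2*a*c) := by
      have e1 : Real.cos θ * (2*a*c) = a^2+c^2-b^2 := by linarith [h2ac]
      have e2 : (Real.sqrt 2/2 + t/4) * (2*a*c) = Real.sqrt 2*a*c + t*(a*c)/2 := by ring
      have e3 : 0 ≤ t*(a*c - 1/2) := mul_nonneg ht0 (by linarith)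
      have e4 : 25*(C'+1)*ε = t/4 := by rw [ht_def]; ring
      rw [e1, e2]
      nlinarith [hkey]
    exact le_of_mul_le_mul_right hmul (by positivity)
  by_contra hcon
  push_neg at hcon
  have h1 : Real.cos (π/4 - t) < Real.cos θ :=
    Real.cos_lt_cos_of_nonneg_of_le_pi hθ1 (by linarith [Real.pi_pos]) hcon
  have h2 := cos_pi_div_four_sub_ge ht0 ht2
  linarith


/-- If all pairwise distances of x₁, x₂, x₃ ∈ ℝ² lie in (1−ε, √2+ε) and
|x₁−x₂| = 1 + O(ε), then for ε small enough the angles ∠x₁x₂x₃ and ∠x₃x₁x₂ are both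
at least 45° − O(ε). -/
theorem base_angles_ge_fortyfive :
    ∀ C' : ℝ, 0 < C' → ∃ C : ℝ, 0 < C ∧ ∃ ε₀ : ℝ, 0 < ε₀ ∧ ∀ ε : ℝ, 0 < ε → ε < ε₀ →
      ∀ x₁ x₂ x₃ : EuclideanSpace ℝ (Fin 2),
        dist x₁ x₂ ∈ Set.Ioo (1 - ε) (Real.sqrt 2 + ε) →
        dist x₁ x₃ ∈ Set.Ioo (1 - ε) (Real.sqrt 2 + ε) →
        dist x₂ x₃ ∈ Set.Ioo (1 - ε) (Real.sqrt 2 + ε) →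
        |dist x₁ x₂ - 1| ≤ C' * ε →
        π / 4 - C * ε ≤ EuclideanGeometry.angle x₁ x₂ x₃ ∧
          π / 4 - C * ε ≤ EuclideanGeometry.angle x₃ x₁ x₂ := by
  intro C' hC'
  refine ⟨100*(C'+1), by positivity, 1/(1000*(C'+1)), by positivity, ?_⟩
  intro ε hε hε₀ x₁ x₂ x₃ h12 h13 h23 habs
  obtain ⟨h12a, h12b⟩ := h12
  obtain ⟨h13a, h13b⟩ := h13
  obtain ⟨h23a, h23b⟩ := h23
  constructor
  · have hlaw := EuclideanGeometry.law_cos x₁ x₂ x₃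
    rw [dist_comm x₃ x₂] at hlaw
    exact key_angle C' ε (dist x₁ x₂) (dist x₁ x₃) (dist x₂ x₃)
      (EuclideanGeometry.angle x₁ x₂ x₃) hC' hε hε₀.le habs h23a h23b h13a
      (EuclideanGeometry.angle_nonneg _ _ _) (EuclideanGeometry.angle_le_pi _ _ _)
      (by linarith [hlaw])
  · have hlaw := EuclideanGeometry.law_cos x₃ x₁ x₂
    rw [dist_comm x₃ x₁, dist_comm x₂ x₁, dist_comm x₃ x₂] at hlaw
    exact key_angle C' ε (dist x₁ x₂) (dist x₂ x₃) (dist x₁ x₃)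
      (EuclideanGeometry.angle x₃ x₁ x₂) hC' hε hε₀.le habs h13a h13b h23a
      (EuclideanGeometry.angle_nonneg _ _ _) (EuclideanGeometry.angle_le_pi _ _ _)
      (by linarith [hlaw])
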